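/- The function T(ξ) = ξ + η(ξ) is monotone nondecreasing on ℝ. -/

import Mathlib

set_option maxHeartbeats 1000000

open MeasureTheory Real Set intervalIntegral

/-- The soft-thresholding function induced by the max-scheduling policy; at
`ξ = 0` both integrals vanish and Lean's `0/0 = 0` gives `eta σ ρ 0 = 0`. -/
noncomputable def eta (σ ρ : ℝ) (ξ : ℝ) : ℝ :=
  (∫ τ in (-|ξ|)..|ξ|, τ * Real.exp (-(τ - ρ * ξ) ^ 2 / (2 * σ ^ 2 * (1 - ρ ^ 2)))) /
  (∫ τ in (-|ξ|)..|ξ|, Real.exp (-(τ - ρ * ξ) ^ 2 / (2 * σ ^ 2 * (1 - ρ ^ 2))))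

noncomputable def gau (c x : ℝ) : ℝ := Real.exp (-x^2 / c)

lemma gau_cont (c : ℝ) : Continuous (gau c) := by
  unfold gau; exact (((continuous_pow 2).neg).div_const c).rexp

lemma gau_pos (c x : ℝ) : 0 < gau c x := Real.exp_pos _

lemma hasDerivAt_gau (c : ℝ) (hc : c ≠ 0) (x : ℝ) :
    HasDerivAt (gau c) (-2 * x / c * gau c x) x := by
  have h1 : HasDerivAt (fun x : ℝ => -x^2 / c) (-2 * x / c) x := by
    have := ((hasDerivAt_pow 2 x).neg).div_const c
    exact this.congr_deriv (by norm_num)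
  have := h1.exp
  unfold gau
  convert this using 1
  ring

lemma gau_le_one (c : ℝ) (hc : 0 < c) (x : ℝ) : gau c x ≤ 1 := by
  unfold gau
  rw [Real.exp_le_one_iff]
  exact div_nonpos_of_nonpos_of_nonneg (neg_nonpos.2 (by positivity)) hc.le

lemma gau_logconcave (c : ℝ) (hc : 0 < c) {a t u : ℝ} (hat : a ≤ t) (htu : t ≤ u) :
    gau c a * gau c u ≤ gau c t * gau c (a + u - t) := by
  unfold gau
  rw [← Real.exp_add, ← Real.exp_add, Real.exp_le_exp]
  rw [← add_div, ← add_div, div_le_div_iff₀ hc hc]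
  nlinarith [mul_nonneg (sub_nonneg.2 hat) (sub_nonneg.2 htu), sq_nonneg (t - a), hc.le]

lemma key_ineq (c : ℝ) (hc : 0 < c) (a b : ℝ) (hab : a ≤ b) :
    gau c a * (∫ u in a..b, (u - a) * gau c u) ≤ (∫ u in a..b, gau c u)^2 := by
  set g := gau c with hg
  have gcont := gau_cont c
  have gint : ∀ x y : ℝ, IntervalIntegrable g volume x y := fun x y =>
    gcont.intervalIntegrable x y
  set Z : ℝ := ∫ u in a..b, g u with hZ
  set φ : ℝ × ℝ → ℝ := fun p => g p.1 * g (a + p.2 - p.1) with hφ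
  set S : Set (ℝ × ℝ) := {p : ℝ × ℝ | p.1 ≤ p.2} with hS
  have hSmeas : MeasurableSet S := measurableSet_le measurable_fst measurable_snd
  set Q : ℝ × ℝ → ℝ := S.indicator φ with hQ
  set μ := volume.restrict (Ioc a b) with hμ
  have hφcont : Continuous φ := by
    apply Continuous.mul (gcont.comp continuous_fst)
    exact gcont.comp ((continuous_const.add continuous_snd).sub continuous_fst)
  have hQmeas : AEStronglyMeasurable Q (μ.prod μ) :=
    (hφcont.aestronglyMeasurable).indicator hSmeas
  have hQbdd : ∀ z, ‖Q z‖ ≤ 1 := by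
    intro z
    rw [hQ, Set.indicator_apply]
    split_ifs with h
    · rw [Real.norm_eq_abs, abs_of_nonneg (le_of_lt (mul_pos (gau_pos _ _) (gau_pos _ _)))]
      calc g z.1 * g (a + z.2 - z.1) ≤ 1 * 1 := by
            apply mul_le_mul (gau_le_one c hc _) (gau_le_one c hc _) (gau_pos _ _).le zero_le_one
        _ = 1 := by ring
    · simp
  have hQint : Integrable Q (μ.prod μ) :=
    Integrable.mono' (integrable_const 1) hQmeas (Filter.Eventually.of_forall hQbdd)
  -- inner formula for fixed u
  have inner1 : ∀ u, u ∈ Ioc a b → (∫ t, Q (t, u) ∂μ) = ∫ t in a..u, φ (t, u) := by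
    intro u hu
    have heq : (fun t => Q (t, u)) = Set.indicator (Iic u) (fun t => φ (t, u)) := by
      funext t
      simp only [hQ, Set.indicator_apply, hS, Set.mem_setOf_eq, Set.mem_Iic]
    rw [hμ, heq, setIntegral_indicator measurableSet_Iic, Set.Ioc_inter_Iic,
      min_eq_right hu.2, intervalIntegral.integral_of_le hu.1.le]
  -- step 1 : pointwise lower bound on the inner integral
  have step1 : ∀ u, u ∈ Ioc a b → (u - a) * (g a * g u) ≤ ∫ t, Q (t, u) ∂μ := by
    intro u hu
    rw [inner1 u hu]
    have h1 : (u - a) * (g a * g u) = ∫ _ in a..u, g a * g u := by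
      rw [intervalIntegral.integral_const, smul_eq_mul]
    rw [h1]
    have hcφ : Continuous (fun t => g t * g (a + u - t)) :=
      gcont.mul (gcont.comp ((continuous_const.sub continuous_id')))
    exact intervalIntegral.integral_mono_on (f := fun _ => g a * g u)
      (g := fun t => g t * g (a + u - t)) hu.1.le intervalIntegrable_const
      (hcφ.intervalIntegrable _ _) (fun t ht => gau_logconcave c hc ht.1 ht.2)
  -- inner formula for fixed t
  have inner2 : ∀ t, t ∈ Ioc a b → (∫ u, Q (t, u) ∂μ) = g t * ∫ s in a..(a + b - t), g s := by
    intro t ht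
    have heq : (fun u => Q (t, u)) = Set.indicator (Ici t) (fun u => φ (t, u)) := by
      funext u
      simp only [hQ, Set.indicator_apply, hS, Set.mem_setOf_eq, Set.mem_Ici]
    have hset : Ioc a b ∩ Ici t = Icc t b := by
      ext x
      simp only [Set.mem_inter_iff, Set.mem_Ioc, Set.mem_Ici, Set.mem_Icc]
      constructor
      · rintro ⟨⟨_, h2⟩, h3⟩; exact ⟨h3, h2⟩
      · rintro ⟨h1, h2⟩; exact ⟨⟨lt_of_lt_of_le ht.1 h1, h2⟩, h1⟩
    rw [hμ, heq, setIntegral_indicator measurableSet_Ici, hset,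
      integral_Icc_eq_integral_Ioc, ← intervalIntegral.integral_of_le ht.2]
    have h2 : ∀ u, φ (t, u) = g t * g (u + (a - t)) := by
      intro u; simp only [hφ]; ring_nf
    simp only [h2]
    rw [intervalIntegral.integral_const_mul, intervalIntegral.integral_comp_add_right]
    congr 2 <;> ring
  -- bound the inner integral for fixed t
  have step2 : ∀ t, t ∈ Ioc a b → (∫ u, Q (t, u) ∂μ) ≤ g t * Z := by
    intro t ht
    rw [inner2 t ht]
    apply mul_le_mul_of_nonneg_left _ (gau_pos c t).le
    have hx : a + b - t ≤ b := by linarith [ht.1]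
    have hsplit : (∫ s in a..(a + b - t), g s) + ∫ s in (a + b - t)..b, g s = Z :=
      intervalIntegral.integral_add_adjacent_intervals (gint _ _) (gint _ _)
    have hnn : 0 ≤ ∫ s in (a + b - t)..b, g s :=
      intervalIntegral.integral_nonneg hx (fun x _ => (gau_pos c x).le)
    linarith
  -- assemble
  have lhs_eq : g a * (∫ u in a..b, (u - a) * g u) = ∫ u in Ioc a b, (u - a) * (g a * g u) := by
    rw [← intervalIntegral.integral_const_mul, intervalIntegral.integral_of_le hab]
    congr 1; funext u; ring
  rw [lhs_eq]
  have swap : (∫ u, (∫ t, Q (t, u) ∂μ) ∂μ) = ∫ t, (∫ u, Q (t, u) ∂μ) ∂μ :=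
    (integral_integral_swap (f := fun t u => Q (t, u)) hQint).symm
  calc (∫ u in Ioc a b, (u - a) * (g a * g u))
      ≤ ∫ u in Ioc a b, (∫ t, Q (t, u) ∂μ) := by
        apply setIntegral_mono_on
        · exact ((continuous_id'.sub continuous_const).mul
            (continuous_const.mul gcont)).integrableOn_Ioc
        · exact hQint.integral_prod_right
        · exact measurableSet_Ioc
        · exact step1
    _ = ∫ t in Ioc a b, (∫ u, Q (t, u) ∂μ) := swap
    _ ≤ ∫ t in Ioc a b, g t * Z := by
        apply setIntegral_mono_on
        · exact hQint.integral_prod_left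
        · exact (gcont.mul continuous_const).integrableOn_Ioc
        · exact measurableSet_Ioc
        · exact step2
    _ = Z ^ 2 := by
        rw [MeasureTheory.integral_mul_const, ← intervalIntegral.integral_of_le hab]
        ring

noncomputable def Gfun (c x : ℝ) : ℝ := ∫ t in (0:ℝ)..x, gau c t

lemma hasDerivAt_Gfun (c x : ℝ) : HasDerivAt (Gfun c) (gau c x) x :=
  intervalIntegral.integral_hasDerivAt_right ((gau_cont c).intervalIntegrable _ _)
    ((gau_cont c).stronglyMeasurableAtFilter _ _) (gau_cont c).continuousAt

lemma integral_gau_eq (c x y : ℝ) : ∫ t in x..y, gau c t = Gfun c y - Gfun c x := by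
  rw [Gfun, Gfun, ← intervalIntegral.integral_interval_sub_left
    ((gau_cont c).intervalIntegrable _ _) ((gau_cont c).intervalIntegrable _ _)]

lemma integral_id_mul_gau (c : ℝ) (hc : 0 < c) (x y : ℝ) :
    ∫ u in x..y, u * gau c u = c/2 * (gau c x - gau c y) := by
  have h : ∀ u ∈ Set.uIcc x y, HasDerivAt (fun v => -(c/2) * gau c v) (u * gau c u) u := by
    intro u _
    have := (hasDerivAt_gau c hc.ne' u).const_mul (-(c/2))
    exact this.congr_deriv (by field_simp)
  rw [intervalIntegral.integral_eq_sub_of_hasDerivAt h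
    ((continuous_id'.mul (gau_cont c)).intervalIntegrable _ _)]
  ring

noncomputable def Ffun (c ρ : ℝ) (ξ : ℝ) : ℝ :=
  (1+ρ)*ξ + (c/2*(gau c (-(1+ρ)*ξ) - gau c ((1-ρ)*ξ))) /
    (Gfun c ((1-ρ)*ξ) - Gfun c (-(1+ρ)*ξ))

lemma Ffun_deriv_nonneg (c ρ : ℝ) (hc : 0 < c) (hρ0 : 0 ≤ ρ) (hρ1 : ρ < 1)
    {ξ : ℝ} (hξ : 0 < ξ) : ∃ d, HasDerivAt (Ffun c ρ) d ξ ∧ 0 ≤ d := by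
  have hablt : -(1+ρ)*ξ < (1-ρ)*ξ := by nlinarith
  set a : ℝ := -(1+ρ)*ξ with ha
  set b : ℝ := (1-ρ)*ξ with hb
  set A : ℝ := gau c a with hA
  set B : ℝ := gau c b with hB
  set Z : ℝ := Gfun c b - Gfun c a with hZdef
  have hZint : Z = ∫ u in a..b, gau c u := (integral_gau_eq c a b).symm
  have hZpos : 0 < Z := by
    rw [hZint]
    exact intervalIntegral.intervalIntegral_pos_of_pos
      ((gau_cont c).intervalIntegrable _ _) (gau_pos c) hablt
  -- derivatives of the four pieces
  have hlin1 : HasDerivAt (fun ξ : ℝ => -(1+ρ)*ξ) (-(1+ρ)) ξ := by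
    simpa using (hasDerivAt_id ξ).const_mul (-(1+ρ))
  have hlin2 : HasDerivAt (fun ξ : ℝ => (1-ρ)*ξ) (1-ρ) ξ := by
    simpa using (hasDerivAt_id ξ).const_mul (1-ρ)
  have hga : HasDerivAt (fun ξ : ℝ => gau c (-(1+ρ)*ξ))
      ((-2 * a / c * A) * (-(1+ρ))) ξ :=
    (hasDerivAt_gau c hc.ne' _).comp ξ hlin1
  have hgb : HasDerivAt (fun ξ : ℝ => gau c ((1-ρ)*ξ))
      ((-2 * b / c * B) * (1-ρ)) ξ :=
    (hasDerivAt_gau c hc.ne' _).comp ξ hlin2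
  have hGa : HasDerivAt (fun ξ : ℝ => Gfun c (-(1+ρ)*ξ)) (A * (-(1+ρ))) ξ :=
    (hasDerivAt_Gfun c a).comp ξ hlin1
  have hGb : HasDerivAt (fun ξ : ℝ => Gfun c ((1-ρ)*ξ)) (B * (1-ρ)) ξ :=
    (hasDerivAt_Gfun c b).comp ξ hlin2
  have hu : HasDerivAt (fun ξ : ℝ => c/2*(gau c (-(1+ρ)*ξ) - gau c ((1-ρ)*ξ)))
      (c/2*((-2 * a / c * A) * (-(1+ρ)) - (-2 * b / c * B) * (1-ρ))) ξ :=
    (hga.sub hgb).const_mul (c/2)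
  have hv : HasDerivAt (fun ξ : ℝ => Gfun c ((1-ρ)*ξ) - Gfun c (-(1+ρ)*ξ))
      (B * (1-ρ) - A * (-(1+ρ))) ξ := hGb.sub hGa
  have hvne : Gfun c ((1-ρ)*ξ) - Gfun c (-(1+ρ)*ξ) ≠ 0 := hZpos.ne'
  have hlin0 : HasDerivAt (fun ξ : ℝ => (1+ρ)*ξ) (1+ρ) ξ := by
    simpa using (hasDerivAt_id ξ).const_mul (1+ρ)
  set u' : ℝ := c/2*((-2 * a / c * A) * (-(1+ρ)) - (-2 * b / c * B) * (1-ρ)) with hu'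
  set Z' : ℝ := B * (1-ρ) - A * (-(1+ρ)) with hZ'
  set uu : ℝ := c/2*(A - B) with huu
  have hdiv := hu.div hv hvne
  have hF : HasDerivAt (Ffun c ρ) ((1+ρ) + (u' * Z - uu * Z') / Z^2) ξ := by
    have := hlin0.add hdiv
    exact this
  refine ⟨_, hF, ?_⟩
  -- now show nonnegativity
  have hW2 : (0:ℝ) ≤ ∫ v in a..b, (b - v) * gau c v :=
    intervalIntegral.integral_nonneg hablt.le
      (fun v hv => mul_nonneg (by linarith [hv.2]) (gau_pos c v).le)
  set W1 : ℝ := ∫ v in a..b, (v - a) * gau c v with hW1def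
  set W2 : ℝ := ∫ v in a..b, (b - v) * gau c v with hW2def
  have hkey : A * W1 ≤ Z^2 := by rw [hZint]; exact key_ineq c hc a b hablt.le
  have hint1 : IntervalIntegrable (fun v => v * gau c v) volume a b :=
    (continuous_id'.mul (gau_cont c)).intervalIntegrable _ _
  have hint2 : IntervalIntegrable (gau c) volume a b := (gau_cont c).intervalIntegrable _ _
  have hW1eq : W1 = c/2*(A - B) - a * Z := by
    have : W1 = (∫ v in a..b, v * gau c v) - a * ∫ v in a..b, gau c v := by
      rw [hW1def, ← intervalIntegral.integral_const_mul,
        ← intervalIntegral.integral_sub hint1 (hint2.const_mul a)]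
      congr 1; funext v; ring
    rw [this, integral_id_mul_gau c hc, hZint]
  have hW2eq : W2 = b * Z - c/2*(A - B) := by
    have : W2 = b * (∫ v in a..b, gau c v) - ∫ v in a..b, v * gau c v := by
      rw [hW2def, ← intervalIntegral.integral_const_mul,
        ← intervalIntegral.integral_sub (hint2.const_mul b) hint1]
      congr 1; funext v; ring
    rw [this, integral_id_mul_gau c hc, hZint]
  -- algebraic identity
  have hE : (1+ρ)*Z^2 + u' * Z - uu * Z' = (1+ρ)*(Z^2 - A*W1) + (1-ρ)*B*W2 := by
    rw [hW1eq, hW2eq, hu', hZ', huu, ha, hb]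
    field_simp
    ring
  have hB0 : 0 < B := gau_pos c b
  have hEnn : 0 ≤ (1+ρ)*Z^2 + u' * Z - uu * Z' := by
    rw [hE]
    have h1 : 0 ≤ Z^2 - A*W1 := by linarith
    have h2 : 0 ≤ (1-ρ)*B*W2 := mul_nonneg (mul_nonneg (by linarith) (gau_pos c b).le) hW2
    nlinarith
  have hfinal : (1+ρ) + (u' * Z - uu * Z') / Z^2 =
      ((1+ρ)*Z^2 + u' * Z - uu * Z') / Z^2 := by
    field_simp
    ring
  rw [hfinal]
  positivity

lemma gau_def (c x : ℝ) : gau c x = Real.exp (-x^2 / c) := rfl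

lemma eta_eq (σ ρ : ℝ) (hσ : 0 < σ) (hρ0 : 0 ≤ ρ) (hρ1 : ρ < 1) {ξ : ℝ} (hξ : 0 < ξ) :
    ξ + eta σ ρ ξ = Ffun (2*σ^2*(1-ρ^2)) ρ ξ := by
  have h1ρ2 : 0 < 1 - ρ^2 := by nlinarith
  simp only [eta, abs_of_pos hξ]
  set c := 2*σ^2*(1-ρ^2) with hcdef
  have hc : 0 < c := by positivity
  have hablt : -(1+ρ)*ξ < (1-ρ)*ξ := by nlinarith
  -- denominator
  have hDen := intervalIntegral.integral_comp_sub_right (a := -ξ) (b := ξ)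
    (f := fun u => gau c u) (ρ*ξ)
  simp only [gau_def] at hDen
  -- numerator
  have hNum0 : (∫ τ in -ξ..ξ, τ * rexp (-(τ - ρ*ξ)^2 / c)) =
      ∫ τ in -ξ..ξ, (τ - ρ*ξ + ρ*ξ) * rexp (-(τ - ρ*ξ)^2 / c) :=
    intervalIntegral.integral_congr (fun τ _ => by ring_nf)
  have hNum1 := intervalIntegral.integral_comp_sub_right (a := -ξ) (b := ξ)
    (f := fun u => (u + ρ*ξ) * gau c u) (ρ*ξ)
  simp only [gau_def] at hNum1
  rw [hNum0, hNum1, hDen]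
  rw [show -ξ - ρ*ξ = -(1+ρ)*ξ by ring, show ξ - ρ*ξ = (1-ρ)*ξ by ring]
  simp only [← gau_def]
  have hint1 : IntervalIntegrable (fun v => v * gau c v) volume (-(1+ρ)*ξ) ((1-ρ)*ξ) :=
    (continuous_id'.mul (gau_cont c)).intervalIntegrable _ _
  have hint2 : IntervalIntegrable (gau c) volume (-(1+ρ)*ξ) ((1-ρ)*ξ) :=
    (gau_cont c).intervalIntegrable _ _
  have hsplit : (∫ x in (-(1+ρ)*ξ)..((1-ρ)*ξ), (x + ρ*ξ) * gau c x) =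
      (∫ x in (-(1+ρ)*ξ)..((1-ρ)*ξ), x * gau c x) +
        ρ*ξ * ∫ x in (-(1+ρ)*ξ)..((1-ρ)*ξ), gau c x := by
    rw [← intervalIntegral.integral_const_mul,
      ← intervalIntegral.integral_add hint1 (hint2.const_mul _)]
    exact intervalIntegral.integral_congr (fun x _ => by ring)
  rw [hsplit, integral_id_mul_gau c hc, integral_gau_eq]
  have hZpos : 0 < Gfun c ((1-ρ)*ξ) - Gfun c (-(1+ρ)*ξ) := by
    rw [← integral_gau_eq]
    exact intervalIntegral.intervalIntegral_pos_of_pos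
      ((gau_cont c).intervalIntegrable _ _) (gau_pos c) hablt
  rw [Ffun]
  set Z : ℝ := Gfun c ((1-ρ)*ξ) - Gfun c (-(1+ρ)*ξ) with hZ
  rw [add_div, mul_div_assoc, mul_div_cancel_right₀ _ hZpos.ne']
  ring

lemma eta_neg (σ ρ ξ : ℝ) : eta σ ρ (-ξ) = - eta σ ρ ξ := by
  simp only [eta, abs_neg]
  set c := 2*σ^2*(1-ρ^2) with hcdef
  set m := |ξ| with hm
  have hN : (∫ τ in -m..m, τ * rexp (-(τ - ρ*(-ξ))^2 / c)) =
      ∫ τ in -m..m, -((-τ) * rexp (-((-τ) - ρ*ξ)^2 / c)) :=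
    intervalIntegral.integral_congr (fun τ _ => by
      rw [show ((-τ) - ρ*ξ)^2 = (τ - ρ*(-ξ))^2 by ring]; ring)
  have hN2 := intervalIntegral.integral_comp_neg (a := -m) (b := m)
    (f := fun τ => τ * rexp (-(τ - ρ*ξ)^2 / c))
  simp only [neg_neg] at hN2
  have hD : (∫ τ in -m..m, rexp (-(τ - ρ*(-ξ))^2 / c)) =
      ∫ τ in -m..m, rexp (-((-τ) - ρ*ξ)^2 / c) :=
    intervalIntegral.integral_congr (fun τ _ => by
      rw [show ((-τ) - ρ*ξ)^2 = (τ - ρ*(-ξ))^2 by ring])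
  have hD2 := intervalIntegral.integral_comp_neg (a := -m) (b := m)
    (f := fun τ => rexp (-(τ - ρ*ξ)^2 / c))
  simp only [neg_neg] at hD2
  rw [hN, intervalIntegral.integral_neg, hN2, hD, hD2, neg_div]

lemma abs_eta_le (σ ρ ξ : ℝ) : |eta σ ρ ξ| ≤ |ξ| := by
  rcases eq_or_ne ξ 0 with rfl | hne
  · simp [eta]
  · have hm : 0 < |ξ| := abs_pos.2 hne
    simp only [eta]
    set c := 2*σ^2*(1-ρ^2) with hcdef
    set w : ℝ → ℝ := fun τ => rexp (-(τ - ρ*ξ)^2 / c) with hw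
    have hwc : Continuous w := by
      rw [hw]
      exact (((continuous_id'.sub continuous_const).pow 2).neg.div_const c).rexp
    have hD : 0 < ∫ τ in -|ξ|..|ξ|, w τ :=
      intervalIntegral.intervalIntegral_pos_of_pos (hwc.intervalIntegrable _ _)
        (fun x => Real.exp_pos _) (by linarith)
    rw [abs_div, abs_of_pos hD, div_le_iff₀ hD]
    have h1 : |∫ τ in -|ξ|..|ξ|, τ * w τ| ≤ ∫ τ in -|ξ|..|ξ|, |τ * w τ| :=
      intervalIntegral.abs_integral_le_integral_abs (by linarith)
    have h2 : (∫ τ in -|ξ|..|ξ|, |τ * w τ|) ≤ ∫ τ in -|ξ|..|ξ|, |ξ| * w τ := by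
      apply intervalIntegral.integral_mono_on (by linarith)
        (((continuous_id'.mul hwc).abs).intervalIntegrable _ _)
        ((hwc.intervalIntegrable _ _).const_mul _)
      intro τ hτ
      show |τ * rexp (-(τ - ρ * ξ) ^ 2 / c)| ≤ |ξ| * rexp (-(τ - ρ * ξ) ^ 2 / c)
      rw [abs_mul, abs_of_pos (Real.exp_pos _)]
      apply mul_le_mul_of_nonneg_right _ (Real.exp_pos _).le
      rw [abs_le]
      exact ⟨by linarith [hτ.1], hτ.2⟩
    rw [intervalIntegral.integral_const_mul] at h2
    linarith

/-- `T(ξ) = ξ + η(ξ)` is monotone nondecreasing on `ℝ`. -/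
theorem T_monotone (σ ρ : ℝ) (hσ : 0 < σ) (hρ0 : 0 ≤ ρ) (hρ1 : ρ < 1) :
    Monotone (fun ξ : ℝ => ξ + eta σ ρ ξ) := by
  have h1ρ2 : 0 < 1 - ρ^2 := by nlinarith
  have hc : 0 < 2*σ^2*(1-ρ^2) := by positivity
  set c := 2*σ^2*(1-ρ^2) with hcdef
  have hmonoF : MonotoneOn (Ffun c ρ) (Ioi (0:ℝ)) := by
    apply monotoneOn_of_deriv_nonneg (convex_Ioi 0)
    · intro x hx
      obtain ⟨d, hd, _⟩ := Ffun_deriv_nonneg c ρ hc hρ0 hρ1 hx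
      exact hd.differentiableAt.continuousAt.continuousWithinAt
    · rw [interior_Ioi]
      intro x hx
      obtain ⟨d, hd, _⟩ := Ffun_deriv_nonneg c ρ hc hρ0 hρ1 hx
      exact hd.differentiableAt.differentiableWithinAt
    · rw [interior_Ioi]
      intro x hx
      obtain ⟨d, hd, hd0⟩ := Ffun_deriv_nonneg c ρ hc hρ0 hρ1 hx
      rw [hd.deriv]
      exact hd0
  set T : ℝ → ℝ := fun ξ => ξ + eta σ ρ ξ with hT
  have hTF : ∀ ξ : ℝ, 0 < ξ → T ξ = Ffun c ρ ξ := fun ξ hξ => eta_eq σ ρ hσ hρ0 hρ1 hξ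
  have hTpos : ∀ z : ℝ, 0 ≤ z → 0 ≤ T z := by
    intro z hz
    have h1 := abs_eta_le σ ρ z
    rw [abs_of_nonneg hz] at h1
    have h2 := neg_le_of_abs_le h1
    simp only [hT]
    linarith
  have hTneg : ∀ z : ℝ, z ≤ 0 → T z ≤ 0 := by
    intro z hz
    have h1 := abs_eta_le σ ρ z
    rw [abs_of_nonpos hz] at h1
    have h2 := le_of_abs_le h1
    simp only [hT]
    linarith
  have hTodd : ∀ z : ℝ, T (-z) = - T z := by
    intro z
    simp only [hT, eta_neg]
    ring
  intro x y hxy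
  show T x ≤ T y
  rcases lt_or_ge 0 x with hx | hx
  · have hy : 0 < y := lt_of_lt_of_le hx hxy
    rw [hTF x hx, hTF y hy]
    exact hmonoF hx hy hxy
  · rcases lt_or_ge 0 y with hy | hy
    · exact le_trans (hTneg x hx) (hTpos y hy.le)
    · rcases eq_or_lt_of_le hy with hy0 | hy0
      · have h0 : T 0 = 0 := le_antisymm (hTneg 0 le_rfl) (hTpos 0 le_rfl)
        rw [hy0, h0]
        exact hTneg x hx
      · have h1 : (0:ℝ) < -y := by linarith
        have h2 : (0:ℝ) < -x := by linarith
        have h3 : T (-y) ≤ T (-x) := by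
          rw [hTF _ h1, hTF _ h2]
          exact hmonoF h1 h2 (by linarith)
        rw [hTodd, hTodd] at h3
        linarith
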